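/- For any sequence x over a q-ary alphabet of length n and any t ≥ 0, the number of distinct sequences obtainable from x by deleting exactly t symbols is at most C(r(x)+t-1, t), where r(x) is the number of runs of x. -/

import Mathlib

/-- The t-deletion ball: length-(|x|-t) subsequences of x. -/
def dBall {α : Type*} (t : ℕ) (x : List α) : Set (List α) :=
  {z | z.Sublist x ∧ z.length + t = x.length}

/-- Number of runs of a sequence. -/
def nRuns {α : Type*} [DecidableEq α] (x : List α) : ℕ :=
  (x.destutter (· ≠ ·)).length

section Aux

variable {α : Type*} [DecidableEq α]

/-- Finset version of the deletion ball. -/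
def ballF (t : ℕ) (x : List α) : Finset (List α) :=
  x.sublists.toFinset.filter (fun z => z.length + t = x.length)

lemma mem_ballF {t : ℕ} {x z : List α} :
    z ∈ ballF t x ↔ z.Sublist x ∧ z.length + t = x.length := by
  simp [ballF, List.mem_sublists]

lemma dBall_eq_ballF (t : ℕ) (x : List α) : dBall t x = ↑(ballF t x) := by
  ext z
  simp [dBall, mem_ballF]

lemma sub_rep (a : α) (m : ℕ) (y : List α) :
    ∀ z : List α, z.Sublist (List.replicate m a ++ y) →
      ∃ k ≤ m, ∃ w, z = List.replicate k a ++ w ∧ w.Sublist y := by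
  induction m with
  | zero =>
    intro z hz
    exact ⟨0, le_refl 0, z, by simp, by simpa using hz⟩
  | succ m ih =>
    intro z hz
    rw [List.replicate_succ, List.cons_append] at hz
    cases hz with
    | cons _ h =>
      obtain ⟨k, hk, w, hw, hwy⟩ := ih z h
      exact ⟨k, le_trans hk (Nat.le_succ m), w, hw, hwy⟩
    | cons_cons _ h =>
      rename_i z'
      obtain ⟨k, hk, w, hw, hwy⟩ := ih z' h
      exact ⟨k + 1, Nat.succ_le_succ hk, w, by simp [List.replicate_succ, hw], hwy⟩

lemma destutter'_length (l : List α) :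
    ∀ a : α, (List.destutter' (· ≠ ·) a l).length
      = nRuns (l.dropWhile (fun b => b = a)) + 1 := by
  induction l with
  | nil => intro a; simp [List.destutter'_nil, nRuns]
  | cons b l ih =>
    intro a
    by_cases hba : b = a
    · subst hba
      rw [List.destutter'_cons]
      simpa using ih b
    · rw [List.destutter'_cons, if_pos (show a ≠ b from fun h => hba h.symm)]
      rw [List.dropWhile_cons_of_neg (by simpa using hba)]
      simp [nRuns, List.destutter_cons']

lemma nRuns_cons (a : α) (l : List α) :
    nRuns (a :: l) = nRuns (l.dropWhile (fun b => b = a)) + 1 := by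
  rw [nRuns, List.destutter_cons', destutter'_length]

lemma sum_choose_bound (r t : ℕ) :
    ∑ s ∈ Finset.range (t + 1), Nat.choose (r + s - 1) s ≤ Nat.choose (r + t) t := by
  induction t with
  | zero => simp
  | succ t ih =>
    rw [Finset.sum_range_succ]
    have h1 : r + (t + 1) - 1 = r + t := by omega
    have h2 : r + (t + 1) = (r + t) + 1 := by omega
    rw [h1, h2, Nat.choose_succ_succ]
    exact Nat.add_le_add_right ih _

lemma ballF_card_le : ∀ N : ℕ, ∀ x : List α, x.length ≤ N → ∀ t : ℕ,
    (ballF t x).card ≤ Nat.choose (nRuns x + t - 1) t := by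
  intro N
  induction N with
  | zero =>
    intro x hx t
    have hx0 : x = [] := List.length_eq_zero_iff.mp (Nat.le_zero.mp hx)
    subst hx0
    cases t with
    | zero =>
      have : ballF 0 ([] : List α) = {[]} := by
        ext z; simp [mem_ballF, List.length_eq_zero_iff]
      simp [this, nRuns]
    | succ t =>
      have : ballF (t + 1) ([] : List α) = ∅ := by
        ext z; simp [mem_ballF]
      simp [this]
  | succ N ih =>
    intro x hx t
    cases hxc : x with
    | nil => exact ih [] (by simp) t
    | cons a xs =>
      subst hxc
      -- decompose x into leading run and rest
      set p : α → Bool := fun b => b = a with hp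
      set y : List α := (a :: xs).dropWhile p with hy
      set m : ℕ := ((a :: xs).takeWhile p).length with hm
      have htake : (a :: xs).takeWhile p = List.replicate m a := by
        rw [List.eq_replicate_iff]
        refine ⟨rfl, fun b hb => ?_⟩
        have := List.mem_takeWhile_imp hb
        simpa [hp] using this
      have hxrep : a :: xs = List.replicate m a ++ y := by
        rw [← htake, hy, List.takeWhile_append_dropWhile]
      have hylen : y.length ≤ N := by
        have hsub : y.Sublist (a :: xs) := by
          rw [hy]; exact List.dropWhile_sublist p
        have hm1 : 1 ≤ m := by
          rw [hm, List.takeWhile_cons_of_pos (by simp [hp])]; simp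
        have : m + y.length = (a :: xs).length := by
          rw [hxrep]; simp
        omega
      have hruns : nRuns (a :: xs) = nRuns y + 1 := by
        rw [nRuns_cons a xs, hy, List.dropWhile_cons_of_pos (by simp [hp])]
      -- covering of the ball
      have hcover : ballF t (a :: xs) ⊆
          (Finset.range (t + 1)).biUnion
            (fun d => (ballF (t - d) y).image
              (fun w => List.replicate (m - d) a ++ w)) := by
        intro z hz
        rw [mem_ballF] at hz
        obtain ⟨hzs, hzl⟩ := hz
        rw [hxrep] at hzs hzl
        obtain ⟨k, hk, w, hw, hwy⟩ := sub_rep a m y z hzs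
        have hwly : w.length ≤ y.length := hwy.length_le
        have hzlen : z.length = k + w.length := by simp [hw]
        rw [List.length_append, List.length_replicate] at hzl
        have hdt : m - k ≤ t := by omega
        refine Finset.mem_biUnion.mpr ⟨m - k, Finset.mem_range.mpr (by omega), ?_⟩
        refine Finset.mem_image.mpr ⟨w, ?_, ?_⟩
        · rw [mem_ballF]
          exact ⟨hwy, by omega⟩
        · rw [hw]
          congr 1
          congr 1
          omega
      calc (ballF t (a :: xs)).card
          ≤ ∑ d ∈ Finset.range (t + 1),
              ((ballF (t - d) y).image (fun w => List.replicate (m - d) a ++ w)).card :=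
            le_trans (Finset.card_le_card hcover) (Finset.card_biUnion_le)
        _ ≤ ∑ d ∈ Finset.range (t + 1), (ballF (t - d) y).card :=
            Finset.sum_le_sum (fun d _ => Finset.card_image_le)
        _ ≤ ∑ d ∈ Finset.range (t + 1), Nat.choose (nRuns y + (t - d) - 1) (t - d) :=
            Finset.sum_le_sum (fun d _ => ih y hylen (t - d))
        _ = ∑ s ∈ Finset.range (t + 1), Nat.choose (nRuns y + s - 1) s := by
            have := Finset.sum_range_reflect
              (fun s => Nat.choose (nRuns y + s - 1) s) (t + 1)
            simpa using this
        _ ≤ Nat.choose (nRuns y + t) t := sum_choose_bound (nRuns y) t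
        _ = Nat.choose (nRuns (a :: xs) + t - 1) t := by rw [hruns]; congr 1; omega

end Aux

theorem stmt_1 (q n t : ℕ) (x : List (Fin q)) (hx : x.length = n) :
    (dBall t x).ncard ≤ Nat.choose (nRuns x + t - 1) t := by
  rw [dBall_eq_ballF, Set.ncard_coe_finset]
  exact ballF_card_le x.length x (le_refl _) t
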